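/- Let X be a Hilbert space, A a closed symmetric densely defined operator in X with domain D_m, and suppose the quotient D_max/D_m (where D_max = dom A*) carries the symplectic form induced by Green's form {x+D_m, y+D_m} := ⟨A*x, y⟩ − ⟨x, A*y⟩. Let D_W be an intermediate Hilbert space D_m ↪ D_W ↪ D_max with continuous inclusions, such that on D_m the graph norm and the D_W-norm are equivalent, and D_W is dense in D_max in the graph norm. Then the quotient D_W/D_m is a weak symplectic Hilbert space with the symplectic form obtained by restricting Green's form; in particular the restricted form is bounded and non-degenerate on D_W/D_m. -/

import Mathlib

/-- Let `A` be a closed symmetric densely defined operator in a Hilbert space `X`,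
with minimal domain `D_m`, adjoint `A*` with maximal domain `D_max`, and let
`D_W` be an intermediate Hilbert space (with norm `NW`) such that the inclusion
`D_W ↪ D_max` is continuous, the graph norm and `NW` are equivalent on `D_m`, and
`D_W` is dense in `D_max` in the graph norm. Then `D_W/D_m` is a weak symplectic
Hilbert space with the restriction of Green's form
`{x,y} = ⟨A*x,y⟩ − ⟨x,A*y⟩`: the form is bounded with respect to `NW` and
non-degenerate modulo `D_m`. -/
theorem reduced_boundary_space_weak_symplectic
    {X : Type*} [NormedAddCommGroup X] [InnerProductSpace ℂ X] [CompleteSpace X]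
    (Dm Dmax : Submodule ℂ X) (hDmmax : Dm ≤ Dmax)
    (hdense : Dense (Dm : Set X))
    (Astar : ↥Dmax →ₗ[ℂ] X)
    -- A := Astar|_{Dm} is closed:
    (hclosed : IsClosed {p : X × X | ∃ x : ↥Dmax, (x : X) ∈ Dm ∧ p.1 = ↑x ∧ p.2 = Astar x})
    -- Dmax is the adjoint domain of A, and Astar acts as the adjoint (in particular A is symmetric):
    (hadj_dom : ∀ y : X,
      (∃ z : X, ∀ x : ↥Dmax, (x : X) ∈ Dm →
        (inner ℂ (Astar x) y : ℂ) = (inner ℂ ((x : X)) z : ℂ)) ↔ y ∈ Dmax)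
    (hadj_eq : ∀ x y : ↥Dmax, (x : X) ∈ Dm →
      (inner ℂ (Astar x) ((y : X)) : ℂ) = (inner ℂ ((x : X)) (Astar y) : ℂ))
    -- the intermediate space D_W with its Hilbert norm NW:
    (DW : Submodule ℂ X) (hDmW : Dm ≤ DW) (hWmax : DW ≤ Dmax)
    (NW : X → ℝ) (hNW_nonneg : ∀ x : X, 0 ≤ NW x)
    -- continuous inclusion D_W ↪ D_max (graph norm):
    (hincl : ∃ c : ℝ, ∀ x : ↥Dmax, (x : X) ∈ DW →
      Real.sqrt (‖(x : X)‖ ^ 2 + ‖Astar x‖ ^ 2) ≤ c * NW (x : X))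
    -- equivalence of the graph norm and NW on D_m:
    (hequiv : ∃ c' : ℝ, ∀ x : ↥Dmax, (x : X) ∈ Dm →
      NW (x : X) ≤ c' * Real.sqrt (‖(x : X)‖ ^ 2 + ‖Astar x‖ ^ 2))
    -- density of D_W in D_max in the graph norm:
    (hWdense : ∀ (x : ↥Dmax) (ε : ℝ), 0 < ε → ∃ y : ↥Dmax, (y : X) ∈ DW ∧
      ‖(x : X) - (y : X)‖ ^ 2 + ‖Astar x - Astar y‖ ^ 2 < ε) :
    -- Green's form is bounded on D_W with respect to NW:
    (∃ C : ℝ, ∀ x y : ↥Dmax, (x : X) ∈ DW → (y : X) ∈ DW →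
      ‖(inner ℂ (Astar x) ((y : X)) : ℂ) - (inner ℂ ((x : X)) (Astar y) : ℂ)‖
        ≤ C * NW (x : X) * NW (y : X)) ∧
    -- Green's form is non-degenerate on D_W/D_m:
    (∀ x : ↥Dmax, (x : X) ∈ DW →
      (∀ y : ↥Dmax, (y : X) ∈ DW →
        (inner ℂ (Astar x) ((y : X)) : ℂ) - (inner ℂ ((x : X)) (Astar y) : ℂ) = 0) →
      (x : X) ∈ Dm) := by
  obtain ⟨c, hc⟩ := hincl
  have hle1 : ∀ x : ↥Dmax, ‖(x : X)‖ ≤ Real.sqrt (‖(x : X)‖ ^ 2 + ‖Astar x‖ ^ 2) := by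
    intro x
    calc ‖(x : X)‖ = Real.sqrt (‖(x : X)‖ ^ 2) := (Real.sqrt_sq (norm_nonneg _)).symm
      _ ≤ _ := Real.sqrt_le_sqrt (by nlinarith [sq_nonneg ‖Astar x‖])
  have hle2 : ∀ x : ↥Dmax, ‖Astar x‖ ≤ Real.sqrt (‖(x : X)‖ ^ 2 + ‖Astar x‖ ^ 2) := by
    intro x
    calc ‖Astar x‖ = Real.sqrt (‖Astar x‖ ^ 2) := (Real.sqrt_sq (norm_nonneg _)).symm
      _ ≤ _ := Real.sqrt_le_sqrt (by nlinarith [sq_nonneg ‖(x : X)‖])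
  constructor
  · refine ⟨2 * c * c, fun x y hx hy => ?_⟩
    have hx' := hc x hx
    have hy' := hc y hy
    have h1 : ‖(x : X)‖ ≤ c * NW (x : X) := le_trans (hle1 x) hx'
    have h2 : ‖Astar x‖ ≤ c * NW (x : X) := le_trans (hle2 x) hx'
    have h3 : ‖(y : X)‖ ≤ c * NW (y : X) := le_trans (hle1 y) hy'
    have h4 : ‖Astar y‖ ≤ c * NW (y : X) := le_trans (hle2 y) hy'
    calc ‖(inner ℂ (Astar x) ((y : X)) : ℂ) - (inner ℂ ((x : X)) (Astar y) : ℂ)‖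
        ≤ ‖(inner ℂ (Astar x) ((y : X)) : ℂ)‖ + ‖(inner ℂ ((x : X)) (Astar y) : ℂ)‖ :=
          norm_sub_le _ _
      _ ≤ ‖Astar x‖ * ‖(y : X)‖ + ‖(x : X)‖ * ‖Astar y‖ :=
          add_le_add (norm_inner_le_norm _ _) (norm_inner_le_norm _ _)
      _ ≤ 2 * c * c * NW (x : X) * NW (y : X) := by
          nlinarith [norm_nonneg ((x : X)), norm_nonneg ((y : X)),
            norm_nonneg (Astar x), norm_nonneg (Astar y),
            le_trans (Real.sqrt_nonneg _) hx', le_trans (Real.sqrt_nonneg _) hy']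
  · intro x hxW hx0
    have hsym : ∀ y : ↥Dmax,
        (inner ℂ (Astar x) ((y : X)) : ℂ) = inner ℂ ((x : X)) (Astar y) := by
      intro y
      rw [← sub_eq_zero]
      set g : ℂ := (inner ℂ (Astar x) ((y : X)) : ℂ) - inner ℂ ((x : X)) (Astar y) with hg
      set M : ℝ := ‖Astar x‖ + ‖(x : X)‖ + 1 with hM
      have hM0 : (0 : ℝ) < M := by positivity
      have key : ∀ δ : ℝ, 0 < δ → ‖g‖ ≤ δ := by
        intro δ hδ
        have hεpos : (0 : ℝ) < (δ / M) ^ 2 := by positivity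
        obtain ⟨z, hzW, hz⟩ := hWdense y ((δ / M) ^ 2) hεpos
        have hDM0 : (0 : ℝ) ≤ δ / M := by positivity
        have hyz : ‖(y : X) - (z : X)‖ ≤ δ / M := by
          have h2 : ‖(y : X) - (z : X)‖ ^ 2 ≤ (δ / M) ^ 2 := by
            nlinarith [sq_nonneg ‖Astar y - Astar z‖]
          have := Real.sqrt_le_sqrt h2
          rwa [Real.sqrt_sq (norm_nonneg _), Real.sqrt_sq hDM0] at this
        have hAyz : ‖Astar y - Astar z‖ ≤ δ / M := by
          have h2 : ‖Astar y - Astar z‖ ^ 2 ≤ (δ / M) ^ 2 := by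
            nlinarith [sq_nonneg ‖(y : X) - (z : X)‖]
          have := Real.sqrt_le_sqrt h2
          rwa [Real.sqrt_sq (norm_nonneg _), Real.sqrt_sq hDM0] at this
        have hgz := hx0 z hzW
        have hgform : g = (inner ℂ (Astar x) ((y : X) - (z : X)) : ℂ)
            - inner ℂ ((x : X)) (Astar y - Astar z) := by
          rw [hg, inner_sub_right, inner_sub_right]
          linear_combination hgz
        have hMdiv : M * (δ / M) = δ := mul_div_cancel₀ δ (ne_of_gt hM0)
        calc ‖g‖ = ‖(inner ℂ (Astar x) ((y : X) - (z : X)) : ℂ)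
              - inner ℂ ((x : X)) (Astar y - Astar z)‖ := by rw [hgform]
          _ ≤ ‖(inner ℂ (Astar x) ((y : X) - (z : X)) : ℂ)‖
              + ‖(inner ℂ ((x : X)) (Astar y - Astar z) : ℂ)‖ := norm_sub_le _ _
          _ ≤ ‖Astar x‖ * ‖(y : X) - (z : X)‖ + ‖(x : X)‖ * ‖Astar y - Astar z‖ :=
              add_le_add (norm_inner_le_norm _ _) (norm_inner_le_norm _ _)
          _ ≤ ‖Astar x‖ * (δ / M) + ‖(x : X)‖ * (δ / M) :=
              add_le_add (mul_le_mul_of_nonneg_left hyz (norm_nonneg _))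
                (mul_le_mul_of_nonneg_left hAyz (norm_nonneg _))
          _ ≤ M * (δ / M) := by nlinarith
          _ = δ := hMdiv
      have hg0 : ‖g‖ ≤ 0 := by
        by_contra h
        push_neg at h
        have := key (‖g‖ / 2) (by linarith)
        linarith
      exact norm_le_zero_iff.mp hg0
    -- the graph of A as a closed submodule of the L² product
    let G : Submodule ℂ (WithLp 2 (X × X)) :=
      { carrier := {p | ∃ u : ↥Dmax, (u : X) ∈ Dm ∧ p.fst = ↑u ∧ p.snd = Astar u}
        add_mem' := by
          rintro p q ⟨u, hu, hp1, hp2⟩ ⟨v, hv, hq1, hq2⟩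
          exact ⟨u + v, Dm.add_mem hu hv, by simp [WithLp.add_fst, hp1, hq1],
            by simp [WithLp.add_snd, hp2, hq2]⟩
        zero_mem' := ⟨0, Dm.zero_mem, by simp [WithLp.zero_fst], by simp [WithLp.zero_snd]⟩
        smul_mem' := by
          rintro a p ⟨u, hu, hp1, hp2⟩
          exact ⟨a • u, Dm.smul_mem a hu, by simp [WithLp.smul_fst, hp1],
            by simp [WithLp.smul_snd, hp2]⟩ }
    have hGclosed : IsClosed (G : Set (WithLp 2 (X × X))) := by
      have heq : (G : Set (WithLp 2 (X × X))) =
          (WithLp.prodContinuousLinearEquiv 2 ℂ X X) ⁻¹'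
            {p : X × X | ∃ u : ↥Dmax, (u : X) ∈ Dm ∧ p.1 = ↑u ∧ p.2 = Astar u} := rfl
      rw [heq]
      exact hclosed.preimage (WithLp.prodContinuousLinearEquiv 2 ℂ X X).continuous
    set px : WithLp 2 (X × X) := (WithLp.equiv 2 (X × X)).symm ((x : X), Astar x) with hpx
    have hmem : px ∈ Gᗮᗮ := by
      rw [Submodule.mem_orthogonal]
      intro w hw
      have hrel : ∀ u : ↥Dmax, (u : X) ∈ Dm →
          (inner ℂ ((u : X)) w.fst : ℂ) + inner ℂ (Astar u) w.snd = 0 := by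
        intro u hu
        have h := (Submodule.mem_orthogonal G w).mp hw
          ((WithLp.equiv 2 (X × X)).symm ((u : X), Astar u)) ⟨u, hu, rfl, rfl⟩
        simpa [WithLp.prod_inner_apply, WithLp.toLp_fst, WithLp.toLp_snd] using h
      have hw2 : w.snd ∈ Dmax := (hadj_dom w.snd).mp
        ⟨-w.fst, fun u hu => by
          rw [inner_neg_right]
          linear_combination hrel u hu⟩
      set w2 : ↥Dmax := ⟨w.snd, hw2⟩ with hw2def
      have hAw2 : Astar w2 = -w.fst := by
        refine hdense.eq_of_inner_right ℂ fun v' hv' => ?_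
        obtain ⟨v, rfl⟩ : ∃ v : ↥Dm, (v : X) = v' := ⟨⟨v', hv'⟩, rfl⟩
        set u : ↥Dmax := ⟨(v : X), hDmmax v.2⟩ with hudef
        have h1 := hadj_eq u w2 v.2
        have h2 := hrel u v.2
        have hcoe : ((u : X)) = (v : X) := rfl
        rw [hcoe] at h1 h2
        rw [inner_neg_right]
        linear_combination h2 - h1
      have h3 := hsym w2
      rw [hAw2, inner_neg_right] at h3
      have h4 := congrArg (starRingEnd ℂ) h3
      simp only [inner_conj_symm, map_neg] at h4
      -- h4 : ⟪w.snd, Astar x⟫ = -⟪w.fst, x⟫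
      have : (inner ℂ w ((WithLp.equiv 2 (X × X)).symm ((x : X), Astar x)) : ℂ)
          = inner ℂ w.fst ((x : X)) + inner ℂ w.snd (Astar x) := by
        simp [WithLp.prod_inner_apply, WithLp.toLp_fst, WithLp.toLp_snd]
      rw [hpx, this, h4]
      ring
    have hpxG : px ∈ G := by
      rw [Submodule.orthogonal_orthogonal_eq_closure,
        IsClosed.submodule_topologicalClosure_eq hGclosed] at hmem
      exact hmem
    obtain ⟨u, hu, h1, _⟩ := hpxG
    have hfst : px.fst = (x : X) := rfl
    rw [hfst] at h1
    rw [h1]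
    exact hu
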